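/- Let 0 < s < 1 and 1 ≤ p < ∞ with sp < 1, let b₀, b₁ ∈ ℝ^m, and for j ∈ ℕ, j ≥ 1, define u_j : (0,1) → ℝ^m by u_j(x) = b₀ if jx ∈ [2k, 2k+1) for some integer k, and u_j(x) = b₁ if jx ∈ [2k+1, 2k+2) for some integer k. Then ∬_{(0,1)×(0,1)} |u_j(y) − u_j(x)|^p / |y − x|^{1+sp} dy dx ≤ 2 j^{sp} |b₀ − b₁|^p / (sp(1 − sp)). In particular u_j belongs to Ẇ^{s,p}((0,1), ℝ^m). -/

import Mathlib

open MeasureTheory Set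
open scoped ENNReal NNReal

/-- The oscillating step function `u_j` taking value `b₀` on `[2k/j, (2k+1)/j)` and `b₁` on
`[(2k+1)/j, (2k+2)/j)`: `u_j(x) = b₀` iff `⌊j x⌋` is even. -/
noncomputable def uj {m : ℕ} (b₀ b₁ : EuclideanSpace ℝ (Fin m)) (j : ℕ) (x : ℝ) :
    EuclideanSpace ℝ (Fin m) :=
  if Even ⌊(j : ℝ) * x⌋ then b₀ else b₁

lemma tail_lintegral {σ : ℝ} (hσ : 0 < σ) {c : ℝ} (hc : 0 < c) :
    ∫⁻ t in Ici c, ENNReal.ofReal (t ^ (-(1+σ))) = ENNReal.ofReal (c ^ (-σ) / σ) := by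
  have h1 : (-(1+σ)) < -1 := by linarith
  rw [← setLIntegral_congr (Ioi_ae_eq_Ici (a := c))]
  rw [← ofReal_integral_eq_lintegral_ofReal (integrableOn_Ioi_rpow_of_lt h1 hc)
    ((ae_restrict_iff' measurableSet_Ioi).2 (Filter.Eventually.of_forall
      fun t ht => Real.rpow_nonneg (le_of_lt (hc.trans ht)) _))]
  rw [integral_Ioi_rpow_of_lt h1 hc]
  congr 1
  have : -(1+σ) + 1 = -σ := by ring
  rw [this]
  field_simp

lemma base_lintegral {σ : ℝ} (hσ0 : 0 < σ) (hσ1 : σ < 1) {L : ℝ} (hL : 0 < L) :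
    ∫⁻ t in Ico 0 L, ENNReal.ofReal (t ^ (-σ)) = ENNReal.ofReal (L ^ (1-σ) / (1-σ)) := by
  have hexp : (-1:ℝ) < -σ := by linarith
  have hInt : IntegrableOn (fun t : ℝ => t ^ (-σ)) (Ioc 0 L) := by
    have := intervalIntegral.intervalIntegrable_rpow' (a := 0) (b := L) hexp
    rwa [intervalIntegrable_iff_integrableOn_Ioc_of_le hL.le] at this
  rw [← setLIntegral_congr (α := ℝ) (Ioo_ae_eq_Ico (a := (0:ℝ)) (b := L)),
      setLIntegral_congr (α := ℝ) (Ioo_ae_eq_Ioc (a := (0:ℝ)) (b := L))]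
  rw [← ofReal_integral_eq_lintegral_ofReal hInt
    ((ae_restrict_iff' measurableSet_Ioc).2 (Filter.Eventually.of_forall
      fun t ht => Real.rpow_nonneg ht.1.le _))]
  congr 1
  rw [← intervalIntegral.integral_of_le hL.le, integral_rpow (Or.inl hexp)]
  rw [Real.zero_rpow (by linarith : -σ + 1 ≠ 0)]
  rw [show -σ + 1 = 1 - σ by ring]
  ring

lemma trans_left {σ : ℝ} (c L : ℝ) (hL : 0 < L) :
    ∫⁻ x in Ico c (c+L), ENNReal.ofReal ((x - c) ^ (-σ))
      = ∫⁻ t in Ico 0 L, ENNReal.ofReal (t ^ (-σ)) := by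
  have mp : MeasurePreserving (fun t : ℝ => t + c) volume volume :=
    measurePreserving_add_right volume c
  have h := mp.setLIntegral_comp_preimage_emb (MeasurableEquiv.addRight c).measurableEmbedding
    (fun x => ENNReal.ofReal ((x - c) ^ (-σ))) (Ico c (c+L))
  have hpre : (fun t : ℝ => t + c) ⁻¹' Ico c (c+L) = Ico 0 L := by
    ext t
    simp only [mem_preimage, mem_Ico]
    constructor <;> intro h <;> exact ⟨by linarith [h.1], by linarith [h.2]⟩
  rw [hpre] at h
  simp only [add_sub_cancel_right] at h
  rw [← h]

lemma trans_right {σ : ℝ} (c L : ℝ) (hL : 0 < L) :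
    ∫⁻ x in Ico c (c+L), ENNReal.ofReal ((c + L - x) ^ (-σ))
      = ∫⁻ t in Ioc 0 L, ENNReal.ofReal (t ^ (-σ)) := by
  have mp : MeasurePreserving (fun t : ℝ => (c+L) - t) volume volume :=
    Measure.measurePreserving_sub_left volume (c+L)
  have h := mp.setLIntegral_comp_preimage_emb (MeasurableEquiv.subLeft (c+L)).measurableEmbedding
    (fun x => ENNReal.ofReal ((c + L - x) ^ (-σ))) (Ico c (c+L))
  have hpre : (fun t : ℝ => (c+L) - t) ⁻¹' Ico c (c+L) = Ioc 0 L := by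
    ext t
    simp only [mem_preimage, mem_Ico, mem_Ioc]
    constructor <;> intro h <;> exact ⟨by linarith [h.1], by linarith [h.2]⟩
  rw [hpre] at h
  simp only [sub_sub_cancel] at h
  rw [← h]

lemma inner_le {m : ℕ} (b₀ b₁ : EuclideanSpace ℝ (Fin m)) (j : ℕ) {σ p : ℝ}
    (hp : 0 < p) (hσ : 0 < σ) {x a b : ℝ} (ha : a < x) (hb : x < b)
    (hconst : ∀ y ∈ Ico a b, uj b₀ b₁ j y = uj b₀ b₁ j x) :
    ∫⁻ y in Ioo (0:ℝ) 1, (‖uj b₀ b₁ j y - uj b₀ b₁ j x‖₊ : ℝ≥0∞) ^ p / (‖y - x‖₊ : ℝ≥0∞) ^ (1 + σ)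
      ≤ ENNReal.ofReal (‖b₀ - b₁‖ ^ p) *
        (ENNReal.ofReal ((x - a) ^ (-σ) / σ) + ENNReal.ofReal ((b - x) ^ (-σ) / σ)) := by
  set C : ℝ≥0∞ := ENNReal.ofReal (‖b₀ - b₁‖ ^ p) with hC
  set g : ℝ → ℝ≥0∞ := fun y => C * ENNReal.ofReal (|y - x| ^ (-(1+σ))) with hg
  have hgmeas : Measurable g := by
    rw [hg]; fun_prop
  have step1 : ∫⁻ y in Ioo (0:ℝ) 1,
      (‖uj b₀ b₁ j y - uj b₀ b₁ j x‖₊ : ℝ≥0∞) ^ p / (‖y - x‖₊ : ℝ≥0∞) ^ (1 + σ)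
      ≤ ∫⁻ y in (Ico a b)ᶜ, g y := by
    calc ∫⁻ y in Ioo (0:ℝ) 1,
        (‖uj b₀ b₁ j y - uj b₀ b₁ j x‖₊ : ℝ≥0∞) ^ p / (‖y - x‖₊ : ℝ≥0∞) ^ (1 + σ)
        ≤ ∫⁻ y in Ioo (0:ℝ) 1, ((Ico a b)ᶜ).indicator g y := by
          apply setLIntegral_mono (hgmeas.indicator measurableSet_Ico.compl)
          intro y _
          by_cases hy : y ∈ Ico a b
          · rw [hconst y hy, sub_self]
            simp only [nnnorm_zero, ENNReal.coe_zero]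
            rw [ENNReal.zero_rpow_of_pos hp, ENNReal.zero_div]
            exact zero_le
          · rw [Set.indicator_of_mem (Set.mem_compl hy) g]
            have hyx : y ≠ x := by
              intro h; exact hy (h ▸ ⟨ha.le, hb⟩)
            have habs : 0 < |y - x| := abs_pos.2 (sub_ne_zero.2 hyx)
            have hD : ((‖y - x‖₊ : ℝ≥0∞)) = ENNReal.ofReal |y - x| := by
              rw [← ENNReal.ofReal_coe_nnreal, coe_nnnorm, Real.norm_eq_abs]
            have hN : (‖uj b₀ b₁ j y - uj b₀ b₁ j x‖₊ : ℝ≥0∞) ^ p ≤ C := by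
              have hle : ‖uj b₀ b₁ j y - uj b₀ b₁ j x‖ ≤ ‖b₀ - b₁‖ := by
                unfold uj
                rcases em (Even ⌊(j:ℝ)*y⌋) with h1 | h1 <;>
                  rcases em (Even ⌊(j:ℝ)*x⌋) with h2 | h2 <;>
                  simp [h1, h2, norm_sub_rev b₁ b₀]
              calc (‖uj b₀ b₁ j y - uj b₀ b₁ j x‖₊ : ℝ≥0∞) ^ p
                  = ENNReal.ofReal ‖uj b₀ b₁ j y - uj b₀ b₁ j x‖ ^ p := by
                    rw [← ENNReal.ofReal_coe_nnreal, coe_nnnorm]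
                _ ≤ ENNReal.ofReal ‖b₀ - b₁‖ ^ p :=
                    ENNReal.rpow_le_rpow (ENNReal.ofReal_le_ofReal hle) hp.le
                _ = C := by
                    rw [hC, ← ENNReal.ofReal_rpow_of_nonneg (norm_nonneg _) hp.le]
            calc (‖uj b₀ b₁ j y - uj b₀ b₁ j x‖₊ : ℝ≥0∞) ^ p / (‖y - x‖₊ : ℝ≥0∞) ^ (1 + σ)
                = (‖uj b₀ b₁ j y - uj b₀ b₁ j x‖₊ : ℝ≥0∞) ^ p
                    * ((ENNReal.ofReal |y - x|) ^ (1+σ))⁻¹ := by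
                  rw [hD, div_eq_mul_inv]
              _ ≤ C * ((ENNReal.ofReal |y - x|) ^ (1+σ))⁻¹ := mul_le_mul_left hN _
              _ = g y := by
                  simp only [hg]
                  rw [← ENNReal.ofReal_rpow_of_pos (p := -(1+σ)) habs, ENNReal.rpow_neg]
      _ ≤ ∫⁻ y, ((Ico a b)ᶜ).indicator g y := setLIntegral_le_lintegral _ _
      _ = ∫⁻ y in (Ico a b)ᶜ, g y := lintegral_indicator measurableSet_Ico.compl g
  have hxa : 0 < x - a := sub_pos.2 ha
  have hbx : 0 < b - x := sub_pos.2 hb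
  have hmeas2 : Measurable (fun t : ℝ => C * ENNReal.ofReal (t ^ (-(1+σ)))) := by fun_prop
  have left : ∫⁻ y in Iio a, g y = C * ENNReal.ofReal ((x - a) ^ (-σ) / σ) := by
    rw [setLIntegral_congr (Iio_ae_eq_Iic (a := a))]
    have mp : MeasurePreserving (fun t : ℝ => x - t) volume volume :=
      Measure.measurePreserving_sub_left volume x
    have h := mp.setLIntegral_comp_preimage_emb
      (MeasurableEquiv.subLeft x).measurableEmbedding g (Iic a)
    have hpre : (fun t : ℝ => x - t) ⁻¹' Iic a = Ici (x - a) := by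
      ext t; simp only [mem_preimage, mem_Iic, mem_Ici]
      constructor <;> intro h <;> linarith
    rw [hpre] at h
    rw [← h, setLIntegral_congr_fun measurableSet_Ici
      (fun t ht => by
        have ht0 : 0 < t := lt_of_lt_of_le hxa ht
        simp only [hg]
        rw [show x - t - x = -t by ring, abs_neg, abs_of_pos ht0])]
    rw [lintegral_const_mul C (by fun_prop : Measurable fun t : ℝ => ENNReal.ofReal (t ^ (-(1+σ))))]
    rw [tail_lintegral hσ hxa]
  have right : ∫⁻ y in Ici b, g y = C * ENNReal.ofReal ((b - x) ^ (-σ) / σ) := by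
    have mp : MeasurePreserving (fun t : ℝ => t + x) volume volume :=
      measurePreserving_add_right volume x
    have h := mp.setLIntegral_comp_preimage_emb
      (MeasurableEquiv.addRight x).measurableEmbedding g (Ici b)
    have hpre : (fun t : ℝ => t + x) ⁻¹' Ici b = Ici (b - x) := by
      ext t; simp only [mem_preimage, mem_Ici]
      constructor <;> intro h <;> linarith
    rw [hpre] at h
    rw [← h, setLIntegral_congr_fun measurableSet_Ici
      (fun t ht => by
        have ht0 : 0 < t := lt_of_lt_of_le hbx ht
        simp only [hg]
        rw [show t + x - x = t by ring, abs_of_pos ht0])]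
    rw [lintegral_const_mul C (by fun_prop : Measurable fun t : ℝ => ENNReal.ofReal (t ^ (-(1+σ))))]
    rw [tail_lintegral hσ hbx]
  calc ∫⁻ y in Ioo (0:ℝ) 1,
      (‖uj b₀ b₁ j y - uj b₀ b₁ j x‖₊ : ℝ≥0∞) ^ p / (‖y - x‖₊ : ℝ≥0∞) ^ (1 + σ)
      ≤ ∫⁻ y in (Ico a b)ᶜ, g y := step1
    _ ≤ ∫⁻ y in Iio a ∪ Ici b, g y := by
        apply lintegral_mono_set
        intro y hy
        rcases lt_or_ge y a with h1 | h1
        · exact Or.inl h1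
        · exact Or.inr (le_of_not_gt fun h2 => hy ⟨h1, h2⟩)
    _ ≤ (∫⁻ y in Iio a, g y) + ∫⁻ y in Ici b, g y := lintegral_union_le _ _ _
    _ = C * (ENNReal.ofReal ((x - a) ^ (-σ) / σ) + ENNReal.ofReal ((b - x) ^ (-σ) / σ)) := by
        rw [left, right, mul_add]


/-- upper bound on the Gagliardo seminorm of the oscillating step functions
when `sp < 1`; in particular `u_j ∈ Ẇ^{s,p}((0,1), ℝ^m)`. -/
theorem stmt_9 (m : ℕ) (s p : ℝ) (hs : 0 < s) (hs1 : s < 1) (hp : 1 ≤ p) (hsp : s * p < 1)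
    (b₀ b₁ : EuclideanSpace ℝ (Fin m)) (j : ℕ) (hj : 1 ≤ j) :
    (∫⁻ x in Set.Ioo (0 : ℝ) 1, ∫⁻ y in Set.Ioo (0 : ℝ) 1,
        (‖uj b₀ b₁ j y - uj b₀ b₁ j x‖₊ : ℝ≥0∞) ^ p / (‖y - x‖₊ : ℝ≥0∞) ^ (1 + s * p))
      ≤ ENNReal.ofReal (2 * (j : ℝ) ^ (s * p) * ‖b₀ - b₁‖ ^ p / (s * p * (1 - s * p))) ∧
    (∫⁻ x in Set.Ioo (0 : ℝ) 1, ∫⁻ y in Set.Ioo (0 : ℝ) 1,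
        (‖uj b₀ b₁ j y - uj b₀ b₁ j x‖₊ : ℝ≥0∞) ^ p / (‖y - x‖₊ : ℝ≥0∞) ^ (1 + s * p)) < ⊤ := by
  have hp0 : 0 < p := lt_of_lt_of_le one_pos hp
  have hσ0 : 0 < s * p := mul_pos hs hp0
  have hσ1 : s * p < 1 := hsp
  set σ : ℝ := s * p with hσdef
  set J : ℝ := (j : ℝ) with hJdef
  have hJ1 : (1:ℝ) ≤ J := by rw [hJdef]; exact_mod_cast hj
  have hJ0 : 0 < J := lt_of_lt_of_le one_pos hJ1
  set B : ℝ := ‖b₀ - b₁‖ ^ p with hB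
  have hB0 : 0 ≤ B := by positivity
  set K : ℝ≥0∞ := ENNReal.ofReal (B * σ⁻¹) with hK
  set Φ : ℝ → ℝ≥0∞ := fun x =>
    ENNReal.ofReal ((x - (⌊J * x⌋ : ℝ) / J) ^ (-σ)) +
      ENNReal.ofReal ((((⌊J * x⌋ : ℝ) + 1) / J - x) ^ (-σ)) with hΦ
  set S : Set ℝ := ⋃ k : ℤ, {(k : ℝ) / J} with hS
  have hSnull : volume S = 0 := measure_iUnion_null fun k => measure_singleton _
  -- pointwise (off S) bound of the inner integral
  have key : ∀ x : ℝ, x ∉ S →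
      (∫⁻ y in Set.Ioo (0:ℝ) 1,
        (‖uj b₀ b₁ j y - uj b₀ b₁ j x‖₊ : ℝ≥0∞) ^ p / (‖y - x‖₊ : ℝ≥0∞) ^ (1 + σ))
        ≤ K * Φ x := by
    intro x hx
    set k : ℤ := ⌊J * x⌋ with hk
    set a : ℝ := (k : ℝ) / J with ha'
    have hfl : (k : ℝ) ≤ J * x := Int.floor_le _
    have hfl2 : J * x < (k : ℝ) + 1 := Int.lt_floor_add_one _
    have hne : (k : ℝ) ≠ J * x := by
      intro h
      apply hx
      rw [hS, Set.mem_iUnion]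
      refine ⟨k, Set.mem_singleton_iff.2 ?_⟩
      rw [h]
      field_simp
    have hflt : (k : ℝ) < J * x := lt_of_le_of_ne hfl hne
    have hax : a < x := by
      rw [ha', div_lt_iff₀ hJ0]
      linarith [mul_comm J x]
    have hxb : x < ((k : ℝ) + 1) / J := by
      rw [lt_div_iff₀ hJ0]
      linarith [mul_comm J x]
    have hconst : ∀ y ∈ Ico a (((k : ℝ) + 1) / J), uj b₀ b₁ j y = uj b₀ b₁ j x := by
      intro y hy
      have hy1 : (k : ℝ) ≤ J * y := by
        have h1 := hy.1
        rw [ha', div_le_iff₀ hJ0] at h1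
        linarith [mul_comm J y]
      have hy2 : J * y < (k : ℝ) + 1 := by
        have h2 := hy.2
        rw [lt_div_iff₀ hJ0] at h2
        linarith [mul_comm J y]
      have hfy : ⌊J * y⌋ = k := by
        apply Int.floor_eq_iff.2
        exact ⟨hy1, by push_cast; exact hy2⟩
      unfold uj
      rw [← hJdef, hfy, ← hk]
    have h1 := inner_le b₀ b₁ j hp0 hσ0 hax hxb hconst
    refine h1.trans (le_of_eq ?_)
    have e1 : (x - a) ^ (-σ) / σ = σ⁻¹ * (x - a) ^ (-σ) := by ring
    have e2 : (((k : ℝ) + 1) / J - x) ^ (-σ) / σ = σ⁻¹ * (((k : ℝ) + 1) / J - x) ^ (-σ) := by ring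
    rw [e1, e2, ENNReal.ofReal_mul (by positivity), ENNReal.ofReal_mul (by positivity)]
    rw [← mul_add, ← mul_assoc, hK, hB, ← ENNReal.ofReal_mul hB0]
  -- the Φ integral over one subinterval
  have hL : 0 < 1 / J := by positivity
  have h1σ : 0 < 1 - σ := by linarith
  set T : ℝ≥0∞ := ENNReal.ofReal ((1/J) ^ (1-σ) / (1-σ)) with hT
  have piece : ∀ k : ℤ, ∫⁻ x in Ico ((k:ℝ)/J) (((k:ℝ)+1)/J), Φ x = T + T := by
    intro k
    set c : ℝ := (k : ℝ) / J with hc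
    have hcb : ((k:ℝ)+1)/J = c + 1/J := by rw [hc]; ring
    have hfloor : ∀ x ∈ Ico c (c + 1/J), ⌊J * x⌋ = k := by
      intro x hx
      have hx1 : (k : ℝ) ≤ J * x := by
        have h1 := hx.1
        rw [hc, div_le_iff₀ hJ0] at h1
        linarith [mul_comm J x]
      have hx2 : J * x < (k : ℝ) + 1 := by
        have h2 : x < ((k:ℝ)+1)/J := by rw [hcb]; exact hx.2
        rw [lt_div_iff₀ hJ0] at h2
        linarith [mul_comm J x]
      apply Int.floor_eq_iff.2
      exact ⟨hx1, by push_cast; exact hx2⟩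
    rw [hcb]
    rw [show (∫⁻ x in Ico c (c + 1/J), Φ x)
        = ∫⁻ x in Ico c (c + 1/J),
            (ENNReal.ofReal ((x - c) ^ (-σ)) + ENNReal.ofReal ((c + 1/J - x) ^ (-σ))) from
      setLIntegral_congr_fun measurableSet_Ico
        (fun x hx => by
          simp only [hΦ]
          rw [hfloor x hx, ← hc, hcb])]
    rw [lintegral_add_left (by fun_prop : Measurable fun x : ℝ => ENNReal.ofReal ((x - c) ^ (-σ)))]
    rw [trans_left c (1/J) hL, trans_right (σ := σ) c (1/J) hL]
    rw [setLIntegral_congr ((Ioo_ae_eq_Ioc (a := (0:ℝ)) (b := 1/J)).symm.trans Ioo_ae_eq_Ico)]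
    rw [base_lintegral hσ0 hσ1 hL, ← hT]
  -- covering (0,1) by the subintervals
  have cover : Ioo (0:ℝ) 1 ⊆ ⋃ k : Fin j, Ico ((k:ℝ)/J) (((k:ℝ)+1)/J) := by
    intro x hx
    have hx0 : 0 < J * x := mul_pos hJ0 hx.1
    have hfl0 : 0 ≤ ⌊J * x⌋ := Int.floor_nonneg.2 hx0.le
    have hflj : ⌊J * x⌋ < (j : ℤ) := by
      apply Int.floor_lt.2
      push_cast
      rw [← hJdef]
      calc J * x < J * 1 := mul_lt_mul_of_pos_left hx.2 hJ0
        _ = J := mul_one J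
    set n : ℕ := ⌊J * x⌋.toNat with hn
    have hnj : n < j := by omega
    have hncast : (n : ℝ) = ((⌊J * x⌋ : ℤ) : ℝ) := by
      rw [hn]
      exact_mod_cast Int.toNat_of_nonneg hfl0
    apply Set.mem_iUnion.2
    refine ⟨⟨n, hnj⟩, ?_, ?_⟩
    · show ((n:ℝ))/J ≤ x
      rw [hncast, div_le_iff₀ hJ0]
      have h1 := Int.floor_le (J * x)
      linarith [mul_comm J x]
    · show x < ((n:ℝ)+1)/J
      rw [hncast, lt_div_iff₀ hJ0]
      have h2 := Int.lt_floor_add_one (J * x)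
      linarith [mul_comm J x]
  -- putting everything together
  have main : (∫⁻ x in Set.Ioo (0 : ℝ) 1, ∫⁻ y in Set.Ioo (0 : ℝ) 1,
        (‖uj b₀ b₁ j y - uj b₀ b₁ j x‖₊ : ℝ≥0∞) ^ p / (‖y - x‖₊ : ℝ≥0∞) ^ (1 + σ))
      ≤ K * ((j : ℝ≥0∞) * (T + T)) := by
    calc (∫⁻ x in Set.Ioo (0 : ℝ) 1, ∫⁻ y in Set.Ioo (0 : ℝ) 1,
        (‖uj b₀ b₁ j y - uj b₀ b₁ j x‖₊ : ℝ≥0∞) ^ p / (‖y - x‖₊ : ℝ≥0∞) ^ (1 + σ))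
        ≤ ∫⁻ x in Set.Ioo (0 : ℝ) 1, K * Φ x := by
          apply lintegral_mono_ae
          apply ae_restrict_of_ae
          have hae : ∀ᵐ x : ℝ, x ∉ S := by
            rw [← MeasureTheory.measure_eq_zero_iff_ae_notMem]
            exact hSnull
          filter_upwards [hae] with x hx
          exact key x hx
      _ = K * ∫⁻ x in Set.Ioo (0 : ℝ) 1, Φ x :=
          lintegral_const_mul' K Φ ENNReal.ofReal_ne_top
      _ ≤ K * ∫⁻ x in ⋃ k : Fin j, Ico ((k:ℝ)/J) (((k:ℝ)+1)/J), Φ x :=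
          mul_le_mul_right (lintegral_mono_set cover) K
      _ ≤ K * ∑' k : Fin j, ∫⁻ x in Ico ((k:ℝ)/J) (((k:ℝ)+1)/J), Φ x :=
          mul_le_mul_right (lintegral_iUnion_le _ _) K
      _ = K * ((j : ℝ≥0∞) * (T + T)) := by
          congr 1
          rw [tsum_fintype]
          have heach : ∀ k : Fin j, ∫⁻ x in Ico ((k:ℝ)/J) (((k:ℝ)+1)/J), Φ x = T + T := by
            intro k
            have hpk := piece (k : ℤ)
            have hcast : (((k : ℤ) : ℝ)) = ((k : ℕ) : ℝ) := by push_cast; rfl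
            rw [hcast] at hpk
            exact hpk
          rw [Finset.sum_congr rfl (fun k _ => heach k)]
          rw [Finset.sum_const, Finset.card_univ, Fintype.card_fin, nsmul_eq_mul]
  have hval : K * ((j : ℝ≥0∞) * (T + T)) =
      ENNReal.ofReal (2 * J ^ σ * B / (σ * (1 - σ))) := by
    have hTnn : 0 ≤ (1/J) ^ (1-σ) / (1-σ) :=
      div_nonneg (Real.rpow_nonneg (by positivity) _) h1σ.le
    have hTT : T + T = ENNReal.ofReal (2 * ((1/J) ^ (1-σ) / (1-σ))) := by
      rw [hT, ← ENNReal.ofReal_add hTnn hTnn]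
      congr 1
      ring
    rw [hTT, hK]
    rw [show ((j : ℝ≥0∞)) = ENNReal.ofReal J from by
      rw [hJdef]; exact (ENNReal.ofReal_natCast j).symm]
    rw [← ENNReal.ofReal_mul (le_of_lt hJ0), ← ENNReal.ofReal_mul (by positivity)]
    congr 1
    have hpow : J * (1/J) ^ (1-σ) = J ^ σ := by
      rw [one_div, Real.inv_rpow hJ0.le, ← Real.rpow_neg hJ0.le]
      nth_rewrite 1 [← Real.rpow_one J]
      rw [← Real.rpow_add hJ0]
      congr 1
      ring
    have hstep : J * (2 * ((1/J) ^ (1-σ) / (1-σ))) = 2 * J ^ σ / (1-σ) := by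
      rw [← hpow]
      generalize (1/J) ^ (1-σ) = A
      field_simp
    have hσne : σ ≠ 0 := ne_of_gt hσ0
    have h1σne : (1:ℝ) - σ ≠ 0 := ne_of_gt h1σ
    rw [hstep]
    field_simp
  refine ⟨main.trans (le_of_eq hval), lt_of_le_of_lt (main.trans (le_of_eq hval))
    ENNReal.ofReal_lt_top⟩
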